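/- arXiv:1801.00357 — 2 statements merged into one kernel-verified Lean document; each statement's English description precedes it below -/
import Mathlib

section
/- There is an isomorphism of ℂ-algebras ℂPT_n ≅ ℂE_n. -/
set_option linter.unusedSectionVars false

open CategoryTheory

namespace CatAlgebra

variable (C : Type) [Category.{0} C] [Fintype C] [∀ a b : C, Fintype (a ⟶ b)]
  [DecidableEq C] [∀ a b : C, DecidableEq (a ⟶ b)]

/-- The type of morphisms of `C`, bundled with their endpoints. -/
abbrev Mor := Σ a b : C, a ⟶ b

instance : Fintype (Mor C) := by unfold Mor; infer_instance
instance : DecidableEq (Mor C) := by unfold Mor; exact Sigma.instDecidableEqSigma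

variable {C}

/-- Partial composition: `pcomp p q` is "`p` after `q`" when defined. -/
def pcomp (p q : Mor C) : Option (Mor C) :=
  if h : q.2.1 = p.1 then some ⟨q.1, p.2.1, (q.2.2 ≫ eqToHom h) ≫ p.2.2⟩ else none

lemma pcomp_assoc (p q r : Mor C) :
    (pcomp p q).bind (fun s => pcomp s r) = (pcomp q r).bind (fun s => pcomp p s) := by
  obtain ⟨a, b, f⟩ := p
  obtain ⟨c, d, g⟩ := q
  obtain ⟨e, e', h⟩ := r
  by_cases h1 : d = a <;> by_cases h2 : e' = c <;>
    simp [pcomp, h1, h2, Category.assoc]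

/-- The identity morphism at `a`, as an element of `Mor C`. -/
def idMor (a : C) : Mor C := ⟨a, a, 𝟙 a⟩

lemma idMor_injective : Function.Injective (idMor (C := C)) := by
  intro a b h
  exact congrArg Sigma.fst h

lemma pcomp_idMor_left (q : Mor C) : pcomp (idMor q.2.1) q = some q := by
  obtain ⟨a, b, f⟩ := q
  simp [pcomp, idMor]
  exact Category.comp_id f

lemma pcomp_idMor_right (p : Mor C) : pcomp p (idMor p.1) = some p := by
  obtain ⟨a, b, f⟩ := p
  simp [pcomp, idMor]

lemma eq_of_pcomp_idMor_left {a : C} {q m : Mor C} (h : pcomp (idMor a) q = some m) :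
    q = m ∧ a = q.2.1 := by
  obtain ⟨c, d, g⟩ := q
  by_cases h1 : d = a
  · subst h1
    simp [pcomp, idMor] at h
    subst h
    exact ⟨congrArg (fun k => (⟨c, d, k⟩ : Mor C)) (Category.comp_id g).symm, rfl⟩
  · simp [pcomp, idMor, h1] at h

lemma eq_of_pcomp_idMor_right {a : C} {p m : Mor C} (h : pcomp p (idMor a) = some m) :
    p = m ∧ a = p.1 := by
  obtain ⟨c, d, g⟩ := p
  by_cases h1 : a = c
  · subst h1
    simp [pcomp, idMor] at h
    subst h
    exact ⟨rfl, rfl⟩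
  · simp [pcomp, idMor, h1] at h

variable (C)

/-- The complex category algebra of a finite category `C`: the vector space of
`ℂ`-valued functions on the set of morphisms of `C`, with convolution product
(`m' ⋅ m` is the composite when defined and `0` otherwise). -/
def CatAlg : Type := Mor C → ℂ

noncomputable instance : AddCommGroup (CatAlg C) := by unfold CatAlg; infer_instance
noncomputable instance : Module ℂ (CatAlg C) := by unfold CatAlg; infer_instance

variable {C}

noncomputable instance : Mul (CatAlg C) :=
  ⟨fun x y m => ∑ p : Mor C, ∑ q : Mor C, if pcomp p q = some m then x p * y q else 0⟩

lemma mul_def (x y : CatAlg C) (m : Mor C) :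
    (x * y) m = ∑ p : Mor C, ∑ q : Mor C, if pcomp p q = some m then x p * y q else 0 := rfl

noncomputable instance : One (CatAlg C) :=
  ⟨fun m => ∑ a : C, if m = idMor a then 1 else 0⟩

lemma one_def (m : Mor C) : (1 : CatAlg C) m = ∑ a : C, if m = idMor a then 1 else 0 := rfl

lemma one_apply_idMor (a : C) : (1 : CatAlg C) (idMor a) = 1 := by
  rw [one_def, Finset.sum_eq_single a]
  · simp
  · intro b _ hb
    rw [if_neg fun h => hb (idMor_injective h).symm]
  · simp

private lemma sum_option_eq (m : Mor C) (o : Option (Mor C)) (g : Mor C → Option (Mor C))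
    (T : ℂ) :
    (∑ s : Mor C, if o = some s ∧ g s = some m then T else 0) =
      if o.bind g = some m then T else 0 := by
  cases o with
  | none => simp
  | some s₀ =>
    rw [Finset.sum_eq_single s₀]
    · simp
    · intro b _ hb
      simp only [Option.some_inj]
      rw [if_neg]
      rintro ⟨h1, -⟩
      exact hb h1.symm
    · simp

private lemma swap4 (F : Mor C → Mor C → Mor C → Mor C → ℂ) :
    (∑ s : Mor C, ∑ r : Mor C, ∑ p : Mor C, ∑ q : Mor C, F s r p q) =
      ∑ p : Mor C, ∑ q : Mor C, ∑ r : Mor C, ∑ s : Mor C, F s r p q :=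
  calc (∑ s : Mor C, ∑ r : Mor C, ∑ p : Mor C, ∑ q : Mor C, F s r p q)
      = ∑ r : Mor C, ∑ s : Mor C, ∑ p : Mor C, ∑ q : Mor C, F s r p q := Finset.sum_comm
    _ = ∑ r : Mor C, ∑ p : Mor C, ∑ s : Mor C, ∑ q : Mor C, F s r p q :=
        Finset.sum_congr rfl fun r _ => Finset.sum_comm
    _ = ∑ r : Mor C, ∑ p : Mor C, ∑ q : Mor C, ∑ s : Mor C, F s r p q :=
        Finset.sum_congr rfl fun r _ => Finset.sum_congr rfl fun p _ => Finset.sum_comm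
    _ = ∑ p : Mor C, ∑ r : Mor C, ∑ q : Mor C, ∑ s : Mor C, F s r p q := Finset.sum_comm
    _ = ∑ p : Mor C, ∑ q : Mor C, ∑ r : Mor C, ∑ s : Mor C, F s r p q :=
        Finset.sum_congr rfl fun p _ => Finset.sum_comm

private lemma swap3 (F : Mor C → Mor C → Mor C → ℂ) :
    (∑ s : Mor C, ∑ q : Mor C, ∑ r : Mor C, F s q r) =
      ∑ q : Mor C, ∑ r : Mor C, ∑ s : Mor C, F s q r :=
  calc (∑ s : Mor C, ∑ q : Mor C, ∑ r : Mor C, F s q r)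
      = ∑ q : Mor C, ∑ s : Mor C, ∑ r : Mor C, F s q r := Finset.sum_comm
    _ = ∑ q : Mor C, ∑ r : Mor C, ∑ s : Mor C, F s q r :=
        Finset.sum_congr rfl fun q _ => Finset.sum_comm

private lemma mul_assoc' (x y z : CatAlg C) : x * y * z = x * (y * z) := by
  funext m
  rw [mul_def, mul_def]
  have lhs : (∑ s : Mor C, ∑ r : Mor C, if pcomp s r = some m then (x * y) s * z r else 0)
      = ∑ p : Mor C, ∑ q : Mor C, ∑ r : Mor C,
          if (pcomp p q).bind (fun s => pcomp s r) = some m then x p * y q * z r else 0 := by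
    have step : ∀ s r : Mor C, (if pcomp s r = some m then (x * y) s * z r else 0)
        = ∑ p : Mor C, ∑ q : Mor C,
            if pcomp p q = some s ∧ pcomp s r = some m then x p * y q * z r else 0 := by
      intro s r
      by_cases hsr : pcomp s r = some m
      · simp only [hsr, if_pos, and_true, mul_def, Finset.sum_mul, ite_mul, zero_mul]
      · simp [hsr]
    simp only [step]
    rw [swap4]
    refine Finset.sum_congr rfl fun p _ => Finset.sum_congr rfl fun q _ =>
      Finset.sum_congr rfl fun r _ => ?_
    exact sum_option_eq m (pcomp p q) (fun s => pcomp s r) _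
  have rhs : (∑ p : Mor C, ∑ s : Mor C, if pcomp p s = some m then x p * (y * z) s else 0)
      = ∑ p : Mor C, ∑ q : Mor C, ∑ r : Mor C,
          if (pcomp q r).bind (fun s => pcomp p s) = some m then x p * (y q * z r) else 0 := by
    have step : ∀ p s : Mor C, (if pcomp p s = some m then x p * (y * z) s else 0)
        = ∑ q : Mor C, ∑ r : Mor C,
            if pcomp q r = some s ∧ pcomp p s = some m then x p * (y q * z r) else 0 := by
      intro p s
      by_cases hps : pcomp p s = some m
      · simp only [hps, if_pos, and_true, mul_def, Finset.mul_sum, mul_ite, mul_zero]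
      · simp [hps]
    simp only [step]
    refine Finset.sum_congr rfl fun p _ => ?_
    rw [swap3]
    refine Finset.sum_congr rfl fun q _ => Finset.sum_congr rfl fun r _ => ?_
    exact sum_option_eq m (pcomp q r) (fun s => pcomp p s) _
  rw [lhs, rhs]
  refine Finset.sum_congr rfl fun p _ => Finset.sum_congr rfl fun q _ =>
    Finset.sum_congr rfl fun r _ => ?_
  rw [pcomp_assoc, mul_assoc]

private lemma one_mul' (x : CatAlg C) : 1 * x = x := by
  funext m
  rw [mul_def, Finset.sum_eq_single (idMor m.2.1)]
  · rw [Finset.sum_eq_single m]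
    · rw [if_pos (pcomp_idMor_left m), one_apply_idMor, one_mul]
    · intro q _ hq
      rw [if_neg fun h => hq (eq_of_pcomp_idMor_left h).1]
    · simp
  · intro p _ hp
    refine Finset.sum_eq_zero fun q _ => ?_
    split_ifs with h
    · have h1 : (1 : CatAlg C) p = 0 := by
        rw [one_def]
        refine Finset.sum_eq_zero fun a _ => ?_
        rw [if_neg]
        intro hpa
        subst hpa
        obtain ⟨hq, ha⟩ := eq_of_pcomp_idMor_left h
        exact hp (by rw [ha, hq])
      rw [h1, zero_mul]
    · rfl
  · simp

private lemma mul_one' (x : CatAlg C) : x * 1 = x := by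
  funext m
  rw [mul_def, Finset.sum_eq_single m]
  · rw [Finset.sum_eq_single (idMor m.1)]
    · rw [if_pos (pcomp_idMor_right m), one_apply_idMor, mul_one]
    · intro q _ hq
      split_ifs with h
      · have h1 : (1 : CatAlg C) q = 0 := by
          rw [one_def]
          refine Finset.sum_eq_zero fun a _ => ?_
          rw [if_neg]
          intro hqa
          subst hqa
          obtain ⟨hm, ha⟩ := eq_of_pcomp_idMor_right h
          exact hq (by rw [ha, hm])
        rw [h1, mul_zero]
      · rfl
    · simp
  · intro p _ hp
    refine Finset.sum_eq_zero fun q _ => ?_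
    split_ifs with h
    · have h1 : (1 : CatAlg C) q ≠ 0 → q = idMor q.1 := by
        intro hne
        rw [one_def] at hne
        by_contra hq
        refine hne (Finset.sum_eq_zero fun a _ => ?_)
        rw [if_neg]
        intro hqa
        apply hq
        rw [hqa]
        rfl
      by_cases hz : (1 : CatAlg C) q = 0
      · rw [hz, mul_zero]
      · exfalso
        have hqi := h1 hz
        rw [hqi] at h
        exact hp (eq_of_pcomp_idMor_right h).1
    · rfl
  · simp

private lemma left_distrib' (x y z : CatAlg C) : x * (y + z) = x * y + x * z := by
  funext m
  show (x * (y + z)) m = (x * y) m + (x * z) m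
  rw [mul_def, mul_def, mul_def, ← Finset.sum_add_distrib]
  refine Finset.sum_congr rfl fun p _ => ?_
  rw [← Finset.sum_add_distrib]
  refine Finset.sum_congr rfl fun q _ => ?_
  have : (y + z) q = y q + z q := rfl
  split_ifs with h <;> simp [this, mul_add]

private lemma right_distrib' (x y z : CatAlg C) : (x + y) * z = x * z + y * z := by
  funext m
  show ((x + y) * z) m = (x * z) m + (y * z) m
  rw [mul_def, mul_def, mul_def, ← Finset.sum_add_distrib]
  refine Finset.sum_congr rfl fun p _ => ?_
  rw [← Finset.sum_add_distrib]
  refine Finset.sum_congr rfl fun q _ => ?_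
  have : (x + y) p = x p + y p := rfl
  split_ifs with h <;> simp [this, add_mul]

private lemma zero_mul' (x : CatAlg C) : 0 * x = 0 := by
  funext m
  show (0 * x) m = 0
  rw [mul_def]
  refine Finset.sum_eq_zero fun p _ => Finset.sum_eq_zero fun q _ => ?_
  have : (0 : CatAlg C) p = 0 := rfl
  split_ifs <;> simp [this]

private lemma mul_zero' (x : CatAlg C) : x * 0 = 0 := by
  funext m
  show (x * 0) m = 0
  rw [mul_def]
  refine Finset.sum_eq_zero fun p _ => Finset.sum_eq_zero fun q _ => ?_
  have : (0 : CatAlg C) q = 0 := rfl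
  split_ifs <;> simp [this]

noncomputable instance : Ring (CatAlg C) where
  __ := (inferInstance : AddCommGroup (CatAlg C))
  mul := (· * ·)
  one := 1
  mul_assoc := mul_assoc'
  one_mul := one_mul'
  mul_one := mul_one'
  left_distrib := left_distrib'
  right_distrib := right_distrib'
  zero_mul := zero_mul'
  mul_zero := mul_zero'

noncomputable instance : Algebra ℂ (CatAlg C) :=
  Algebra.ofModule
    (fun r x y => by
      funext m
      show ((r • x) * y) m = r • ((x * y) m)
      rw [mul_def, mul_def, Finset.smul_sum]
      refine Finset.sum_congr rfl fun p _ => ?_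
      rw [Finset.smul_sum]
      refine Finset.sum_congr rfl fun q _ => ?_
      have : (r • x) p = r • x p := rfl
      split_ifs <;> simp [this, smul_mul_assoc, mul_assoc])
    (fun r x y => by
      funext m
      show (x * (r • y)) m = r • ((x * y) m)
      rw [mul_def, mul_def, Finset.smul_sum]
      refine Finset.sum_congr rfl fun p _ => ?_
      rw [Finset.smul_sum]
      refine Finset.sum_congr rfl fun q _ => ?_
      have : (r • y) q = r • y q := rfl
      split_ifs <;> simp [this, mul_smul_comm, mul_left_comm])

end CatAlgebra

/-- The objects of the category `E_n`: subsets of `{1, …, n}`. -/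
def EObj (n : ℕ) : Type := Finset (Fin n)

/-- The underlying subset of an object of `E_n`. -/
def EObj.toFinset {n : ℕ} (X : EObj n) : Finset (Fin n) := X

/-- The category `E_n` of all surjections between subsets of `{1, …, n}`:
objects are the subsets of `{1, …, n}` and morphisms are the surjective
(total) functions between them. -/
instance (n : ℕ) : CategoryTheory.Category (EObj n) where
  Hom X Y := {f : {x // x ∈ X.toFinset} → {y // y ∈ Y.toFinset} // Function.Surjective f}
  id X := ⟨id, Function.surjective_id⟩
  comp f g := ⟨g.1 ∘ f.1, g.2.comp f.2⟩

instance (n : ℕ) : Fintype (EObj n) := inferInstanceAs (Fintype (Finset (Fin n)))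
instance (n : ℕ) : DecidableEq (EObj n) := inferInstanceAs (DecidableEq (Finset (Fin n)))
instance (n : ℕ) (X Y : EObj n) : Fintype (X ⟶ Y) := by
  show Fintype {f : _ → _ // Function.Surjective f}
  infer_instance
instance (n : ℕ) (X Y : EObj n) : DecidableEq (X ⟶ Y) := by
  show DecidableEq {f : _ → _ // Function.Surjective f}
  infer_instance

/-- The monoid of all partial functions on an `n`-element set, encoded as the
maps of `Option (Fin n)` preserving the base point `none`; multiplication is
composition of partial functions (from right to left): `(f * g) x = f (g x)`. -/
def PTMonoid (n : ℕ) : Type := {f : Option (Fin n) → Option (Fin n) // f none = none}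

instance (n : ℕ) : Monoid (PTMonoid n) where
  one := ⟨id, rfl⟩
  mul f g := ⟨f.1 ∘ g.1, by simp [g.2, f.2]⟩
  mul_assoc f g h := rfl
  one_mul f := rfl
  mul_one f := rfl

namespace PTIso

open CatAlgebra
open scoped Classical

variable {n : ℕ}

instance : Fintype (PTMonoid n) := by unfold PTMonoid; infer_instance

/-- `m` is a restriction of the partial function `f`. -/
def IsRestr (f : PTMonoid n) (m : Mor (EObj n)) : Prop :=
  ∀ x : {x // x ∈ m.1.toFinset}, f.1 (some x.1) = some (m.2.2.1 x).1

/-- value of the restriction of `f` to `X`. -/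
def rval (f : PTMonoid n) (X : Finset (Fin n)) (h : ∀ x ∈ X, (f.1 (some x)).isSome)
    (x : {x // x ∈ X}) : Fin n := (f.1 (some x.1)).get (h x.1 x.2)

/-- The restriction of `f` to `X ⊆ dom f`, as a morphism of `E_n`. -/
def restrMor (f : PTMonoid n) (X : Finset (Fin n)) (h : ∀ x ∈ X, (f.1 (some x)).isSome) :
    Mor (EObj n) :=
  ⟨X, X.attach.image (rval f X h),
    ⟨fun x => ⟨rval f X h x, Finset.mem_image_of_mem _ (Finset.mem_attach _ _)⟩,
     fun y => by
       obtain ⟨x, _, hxy⟩ := Finset.mem_image.mp y.2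
       exact ⟨x, Subtype.ext hxy⟩⟩⟩

lemma rval_eq_of {f : PTMonoid n} {X : Finset (Fin n)} {h : ∀ x ∈ X, (f.1 (some x)).isSome}
    (x : {x // x ∈ X}) {y : Fin n} (hy : f.1 (some x.1) = some y) : rval f X h x = y := by
  simp [rval, hy]

lemma mem_rimage {f : PTMonoid n} {X : Finset (Fin n)} {h : ∀ x ∈ X, (f.1 (some x)).isSome}
    {y : Fin n} :
    y ∈ X.attach.image (rval f X h) ↔ ∃ x, ∃ _ : x ∈ X, f.1 (some x) = some y := by
  constructor
  · intro hy
    obtain ⟨x, -, hxy⟩ := Finset.mem_image.mp hy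
    refine ⟨x.1, x.2, ?_⟩
    rw [← hxy]
    exact (Option.some_get _).symm
  · rintro ⟨x, hx, hfx⟩
    exact Finset.mem_image.mpr ⟨⟨x, hx⟩, Finset.mem_attach _ _, rval_eq_of _ hfx⟩

lemma isRestr_restrMor (f : PTMonoid n) (X : Finset (Fin n))
    (h : ∀ x ∈ X, (f.1 (some x)).isSome) : IsRestr f (restrMor f X h) :=
  fun x => (Option.some_get (h x.1 x.2)).symm

lemma isSome_of_isRestr {f : PTMonoid n} {m : Mor (EObj n)} (hm : IsRestr f m) :
    ∀ x ∈ m.1.toFinset, (f.1 (some x)).isSome := fun x hx => by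
  rw [hm ⟨x, hx⟩]; rfl

lemma mor_ext {X Y Y' : EObj n} {u : X ⟶ Y} {u' : X ⟶ Y'} (hY : Y = Y')
    (hu : ∀ x, (u.1 x).1 = (u'.1 x).1) :
    (⟨X, Y, u⟩ : Mor (EObj n)) = ⟨X, Y', u'⟩ := by
  subst hY
  have : u = u' := Subtype.ext (funext fun x => Subtype.ext (hu x))
  rw [this]

lemma eq_restrMor {f : PTMonoid n} {m : Mor (EObj n)} (hm : IsRestr f m) :
    m = restrMor f m.1.toFinset (isSome_of_isRestr hm) := by
  apply mor_ext
  · refine Finset.ext fun z => ⟨fun hz => ?_, fun hz => ?_⟩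
    · obtain ⟨x, hx⟩ := m.2.2.2 ⟨z, hz⟩
      refine mem_rimage.mpr ⟨x.1, x.2, ?_⟩
      have h1 := hm x
      rw [hx] at h1
      exact h1
    · obtain ⟨x, hx, hfx⟩ := mem_rimage.mp hz
      have h1 := hm ⟨x, hx⟩
      rw [hfx] at h1
      rw [Option.some_inj.mp h1]
      exact (m.2.2.1 ⟨x, hx⟩).2
  · intro x
    exact (rval_eq_of (h := isSome_of_isRestr hm) x (hm x)).symm

lemma restrMor_congr (f : PTMonoid n) {X X' : Finset (Fin n)} (hX : X = X')
    (h : ∀ x ∈ X, (f.1 (some x)).isSome) :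
    restrMor f X h = restrMor f X' (hX ▸ h) := by subst hX; rfl

lemma restr_eq {f : PTMonoid n} {p p' : Mor (EObj n)} (hp : IsRestr f p) (hp' : IsRestr f p')
    (h1 : p.1 = p'.1) : p = p' := by
  rw [eq_restrMor hp, eq_restrMor hp']
  exact restrMor_congr f (congrArg EObj.toFinset h1) _

lemma pcomp_eq (p q : Mor (EObj n)) (h : q.2.1 = p.1) :
    pcomp p q = some ⟨q.1, p.2.1, (q.2.2 ≫ CategoryTheory.eqToHom h) ≫ p.2.2⟩ := dif_pos h

lemma pcomp_eq_some {p q m : Mor (EObj n)} (h : pcomp p q = some m) :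
    q.1 = m.1 ∧ p.2.1 = m.2.1 ∧ q.2.1 = p.1 := by
  by_cases hd : q.2.1 = p.1
  · rw [pcomp_eq p q hd] at h
    injection h with h
    exact ⟨congrArg (fun s => s.1) h, congrArg (fun s => s.2.1) h, hd⟩
  · simp [pcomp, hd] at h

lemma isRestr_comp {f g : PTMonoid n} {p q m : Mor (EObj n)} (hf : IsRestr f p)
    (hg : IsRestr g q) (hc : pcomp p q = some m) : IsRestr (f * g) m := by
  obtain ⟨a, b, u⟩ := p
  obtain ⟨c, d, v⟩ := q
  by_cases h : d = a
  · subst h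
    rw [pcomp_eq _ _ rfl] at hc
    injection hc with hc
    subst hc
    intro x
    show f.1 (g.1 (some x.1)) = _
    rw [hg x]
    exact hf (v.1 x)
  · simp [pcomp, h] at hc

/-- The morphism of `E_n` canonically associated to a partial function. -/
def toPT (m : Mor (EObj n)) : PTMonoid n :=
  ⟨fun o => o.bind fun x => if h : x ∈ m.1.toFinset then some (m.2.2.1 ⟨x, h⟩).1 else none, rfl⟩

lemma isRestr_toPT (m : Mor (EObj n)) : IsRestr (toPT m) m := by
  rintro ⟨x, hx⟩
  simp [toPT, hx]

lemma isSome_toPT_iff (m : Mor (EObj n)) (x : Fin n) :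
    ((toPT m).1 (some x)).isSome ↔ x ∈ m.1.toFinset := by
  by_cases hx : x ∈ m.1.toFinset <;> simp [toPT, hx]


lemma isRestr_one_iff (m : Mor (EObj n)) :
    IsRestr (1 : PTMonoid n) m ↔ ∃ a : EObj n, m = idMor a := by
  constructor
  · intro h
    have hval : ∀ x : {x // x ∈ m.1.toFinset}, (m.2.2.1 x).1 = x.1 := by
      intro x
      have h1 := h x
      exact (Option.some_inj.mp h1).symm
    have hXY : m.2.1 = m.1 := by
      refine Finset.ext fun z => ⟨fun hz => ?_, fun hz => ?_⟩
      · obtain ⟨x, hx⟩ := m.2.2.2 ⟨z, hz⟩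
        have := hval x
        rw [hx] at this
        have hzx : z = x.1 := this
        rw [hzx]
        exact x.2
      · have := (m.2.2.1 ⟨z, hz⟩).2
        rwa [hval ⟨z, hz⟩] at this
    refine ⟨m.1, ?_⟩
    apply mor_ext hXY
    intro x
    exact hval x
  · rintro ⟨a, rfl⟩
    intro x
    rfl

/-- The canonical multiplicative map from `PT_n` to the category algebra of `E_n`,
sending a partial function to the sum of all its restrictions. -/
noncomputable def phiFun (n : ℕ) (f : PTMonoid n) : CatAlg (EObj n) :=
  fun m => if IsRestr f m then 1 else 0

lemma phiFun_one : phiFun n 1 = 1 := by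
    funext m
    show (if IsRestr (1 : PTMonoid n) m then (1:ℂ) else 0) = (1 : CatAlg (EObj n)) m
    by_cases h : IsRestr (1 : PTMonoid n) m
    · obtain ⟨a, rfl⟩ := (isRestr_one_iff m).mp h
      rw [if_pos h, one_apply_idMor]
    · rw [if_neg h, one_def]
      symm
      refine Finset.sum_eq_zero fun a _ => if_neg fun hma => h ?_
      exact (isRestr_one_iff m).mpr ⟨a, hma⟩
lemma phiFun_mul (f g : PTMonoid n) : phiFun n (f * g) = phiFun n f * phiFun n g := by
    funext m
    rw [mul_def]
    simp only [phiFun]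
    by_cases hm : IsRestr (f * g) m
    · rw [if_pos hm]
      have hdomg : ∀ x ∈ m.1.toFinset, (g.1 (some x)).isSome := by
        intro x hx
        have h1 : f.1 (g.1 (some x)) = some ((m.2.2.1 ⟨x, hx⟩).1) := hm ⟨x, hx⟩
        cases hgx : g.1 (some x) with
        | none => rw [hgx, f.2] at h1; exact absurd h1 (by simp)
        | some y => simp
      set q₀ : Mor (EObj n) := restrMor g m.1.toFinset hdomg with hq₀def
      have hdomf : ∀ y ∈ EObj.toFinset q₀.2.1, (f.1 (some y)).isSome := by
        intro y hy
        obtain ⟨x, hx, hgx⟩ := mem_rimage.mp hy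
        have h1 : f.1 (g.1 (some x)) = some ((m.2.2.1 ⟨x, hx⟩).1) := hm ⟨x, hx⟩
        rw [hgx] at h1
        rw [h1]
        rfl
      set p₀ : Mor (EObj n) := restrMor f (EObj.toFinset q₀.2.1) hdomf with hp₀def
      have hq₀ : IsRestr g q₀ := isRestr_restrMor _ _ _
      have hp₀ : IsRestr f p₀ := isRestr_restrMor _ _ _
      have hcomp : pcomp p₀ q₀ = some m := by
        rw [pcomp_eq p₀ q₀ rfl]
        congr 1
        apply mor_ext
        · -- p₀.2.1 = m.2.1
          refine Finset.ext fun z => ⟨fun hz => ?_, fun hz => ?_⟩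
          · obtain ⟨y, hy, hfz⟩ := mem_rimage.mp hz
            obtain ⟨x, hx, hgx⟩ := mem_rimage.mp hy
            have h1 : f.1 (g.1 (some x)) = some ((m.2.2.1 ⟨x, hx⟩).1) := hm ⟨x, hx⟩
            rw [hgx, hfz] at h1
            rw [Option.some_inj.mp h1]
            exact (m.2.2.1 ⟨x, hx⟩).2
          · obtain ⟨x, hx⟩ := m.2.2.2 ⟨z, hz⟩
            refine mem_rimage.mpr ⟨rval g m.1.toFinset hdomg x,
              mem_rimage.mpr ⟨x.1, x.2, (Option.some_get _).symm⟩, ?_⟩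
            simp only [rval, Option.some_get]
            have h1 : f.1 (g.1 (some x.1)) = some ((m.2.2.1 x).1) := hm x
            rw [hx] at h1
            exact h1
        · intro x
          refine rval_eq_of (h := hdomf) _ ?_
          have hgx : g.1 (some x.1) = some (rval g m.1.toFinset hdomg x) :=
            (Option.some_get _).symm
          show f.1 (some (rval g m.1.toFinset hdomg x)) = some ((m.2.2.1 x).1)
          rw [← hgx]
          exact hm x
      have huniq : ∀ p q : Mor (EObj n), pcomp p q = some m → IsRestr f p → IsRestr g q →
          p = p₀ ∧ q = q₀ := by
        intro p q hc hfp hgq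
        obtain ⟨hq1, hp2, hqp⟩ := pcomp_eq_some hc
        have hq : q = q₀ := restr_eq hgq hq₀ (by rw [hq1]; rfl)
        have hp : p = p₀ := restr_eq hfp hp₀ (by rw [← hqp, hq]; rfl)
        exact ⟨hp, hq⟩
      symm
      rw [Finset.sum_eq_single p₀]
      · rw [Finset.sum_eq_single q₀]
        · rw [if_pos hcomp, if_pos hp₀, if_pos hq₀, one_mul]
        · intro q _ hq
          by_cases h1 : pcomp p₀ q = some m
          · by_cases h2 : IsRestr g q
            · exact absurd (huniq p₀ q h1 hp₀ h2).2 hq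
            · rw [if_pos h1, if_neg h2, mul_zero]
          · exact if_neg h1
        · intro h; exact absurd (Finset.mem_univ q₀) h
      · intro p _ hp
        refine Finset.sum_eq_zero fun q _ => ?_
        by_cases h1 : pcomp p q = some m
        · by_cases h2 : IsRestr f p
          · by_cases h3 : IsRestr g q
            · exact absurd (huniq p q h1 h2 h3).1 hp
            · rw [if_pos h1, if_neg h3, mul_zero]
          · rw [if_pos h1, if_neg h2, zero_mul]
        · exact if_neg h1
      · intro h; exact absurd (Finset.mem_univ p₀) h
    · rw [if_neg hm]
      symm
      refine Finset.sum_eq_zero fun p _ => Finset.sum_eq_zero fun q _ => ?_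
      by_cases h1 : pcomp p q = some m
      · by_cases h2 : IsRestr f p
        · by_cases h3 : IsRestr g q
          · exact absurd (isRestr_comp h2 h3 h1) hm
          · rw [if_pos h1, if_neg h3, mul_zero]
        · rw [if_pos h1, if_neg h2, zero_mul]
      · exact if_neg h1


/-- The canonical multiplicative map from `PT_n` to the category algebra of `E_n`. -/
noncomputable def Phi (n : ℕ) : PTMonoid n →* CatAlg (EObj n) where
  toFun := phiFun n
  map_one' := phiFun_one
  map_mul' := phiFun_mul

/-- The bijection between partial functions and morphisms of `E_n`. -/
noncomputable def ptEquiv (n : ℕ) : PTMonoid n ≃ Mor (EObj n) where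
  toFun f := restrMor f (Finset.univ.filter fun x => (f.1 (some x)).isSome)
    (fun x hx => (Finset.mem_filter.mp hx).2)
  invFun := toPT
  left_inv f := by
    apply Subtype.ext
    funext o
    cases o with
    | none => exact ((toPT _).2).trans f.2.symm
    | some x =>
      show (toPT _).1 (some x) = f.1 (some x)
      simp only [toPT, Option.bind_some]
      split
      · exact Option.some_get _
      · next h =>
        symm
        exact Option.not_isSome_iff_eq_none.mp fun hs =>
          h (Finset.mem_filter.mpr ⟨Finset.mem_univ x, hs⟩)
  right_inv m := by
    simp only []
    have hD : (Finset.univ.filter fun x => (((toPT m).1) (some x)).isSome) = m.1.toFinset := by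
      ext x
      simp [isSome_toPT_iff]
    rw [restrMor_congr (toPT m) hD]
    exact (eq_restrMor (isRestr_toPT m)).symm

/-- basis delta functions of the category algebra -/
noncomputable def delta (m : Mor (EObj n)) : CatAlg (EObj n) :=
  fun m' => if m' = m then 1 else 0

lemma restr_ssubset {m m' : Mor (EObj n)} (h : IsRestr (toPT m) m') (hne : m' ≠ m) :
    m'.1.toFinset ⊂ m.1.toFinset := by
  refine Finset.ssubset_iff_subset_ne.mpr ⟨fun x hx => ?_, fun he => hne (restr_eq h (isRestr_toPT m) he)⟩
  exact (isSome_toPT_iff m x).mp (isSome_of_isRestr h x hx)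

lemma phiFun_eq_sum (f : PTMonoid n) :
    phiFun n f = ∑ m' ∈ Finset.univ.filter (fun m' => IsRestr f m'), delta m' := by
  funext m''
  have h1 : (∑ m' ∈ Finset.univ.filter (fun m' => IsRestr f m'), delta m') m''
      = ∑ m' ∈ Finset.univ.filter (fun m' => IsRestr f m'), delta m' m'' :=
    Finset.sum_apply m'' _ _
  rw [h1]
  show (if IsRestr f m'' then (1:ℂ) else 0) = _
  by_cases h : IsRestr f m''
  · rw [if_pos h]
    symm
    rw [Finset.sum_eq_single m'']
    · exact if_pos rfl
    · intro b _ hb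
      exact if_neg fun e => hb e.symm
    · intro hmem
      exact absurd (Finset.mem_filter.mpr ⟨Finset.mem_univ _, h⟩) hmem
  · rw [if_neg h]
    symm
    refine Finset.sum_eq_zero fun m' hm' => if_neg fun e => ?_
    exact h (e ▸ (Finset.mem_filter.mp hm').2)

end PTIso

open CatAlgebra PTIso in
theorem monoidAlgebra_PT_iso_catAlg_E' (n : ℕ) :
    Nonempty (MonoidAlgebra ℂ (PTMonoid n) ≃ₐ[ℂ] CatAlg (EObj n)) := by
  classical
  set L : MonoidAlgebra ℂ (PTMonoid n) →ₐ[ℂ] CatAlg (EObj n) :=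
    MonoidAlgebra.lift ℂ (CatAlg (EObj n)) (PTMonoid n) (Phi n) with hLdef
  have key : ∀ k, ∀ m : Mor (EObj n), m.1.toFinset.card ≤ k →
      delta m ∈ LinearMap.range L.toLinearMap := by
    intro k
    induction k using Nat.strong_induction_on with
    | _ k IH =>
      intro m hm
      have hmem : m ∈ Finset.univ.filter (fun m' => IsRestr (toPT m) m') :=
        Finset.mem_filter.mpr ⟨Finset.mem_univ _, isRestr_toPT m⟩
      have hsplit : delta m = phiFun n (toPT m) -
          ∑ m' ∈ (Finset.univ.filter (fun m' => IsRestr (toPT m) m')).erase m, delta m' := by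
        rw [phiFun_eq_sum, ← Finset.add_sum_erase _ _ hmem, add_sub_cancel_right]
      rw [hsplit]
      refine Submodule.sub_mem _ ⟨MonoidAlgebra.single (toPT m) 1, ?_⟩
        (Submodule.sum_mem _ fun m' hm' => ?_)
      · show L (MonoidAlgebra.single (toPT m) 1) = phiFun n (toPT m)
        rw [hLdef, MonoidAlgebra.lift_single, one_smul]
        rfl
      · obtain ⟨hne, hm'2⟩ := Finset.mem_erase.mp hm'
        have hlt : m'.1.toFinset.card < m.1.toFinset.card :=
          Finset.card_lt_card (restr_ssubset (Finset.mem_filter.mp hm'2).2 hne)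
        exact IH m'.1.toFinset.card (by omega) m' le_rfl
  have hsurj : Function.Surjective ⇑L.toLinearMap := by
    rw [← LinearMap.range_eq_top, eq_top_iff]
    rintro x -
    have hx : x = ∑ m : Mor (EObj n), x m • delta m := by
      funext m'
      have h1 : (∑ m : Mor (EObj n), x m • delta m) m'
          = ∑ m : Mor (EObj n), (x m • delta m) m' := Finset.sum_apply m' _ _
      rw [h1, Finset.sum_eq_single m']
      · show x m' = x m' • (if m' = m' then (1:ℂ) else 0)
        rw [if_pos rfl, smul_eq_mul, mul_one]
      · intro b _ hb
        show x b • (if m' = b then (1:ℂ) else 0) = 0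
        rw [if_neg fun e => hb e.symm, smul_zero]
      · intro h
        exact absurd (Finset.mem_univ m') h
    rw [hx]
    exact Submodule.sum_mem _ fun m _ =>
      Submodule.smul_mem _ _ (key m.1.toFinset.card m le_rfl)
  let e1 : MonoidAlgebra ℂ (PTMonoid n) ≃ₗ[ℂ] (PTMonoid n → ℂ) :=
    (MonoidAlgebra.coeffLinearEquiv ℂ).trans (Finsupp.linearEquivFunOnFinite ℂ ℂ (PTMonoid n))
  let e2 : CatAlg (EObj n) ≃ₗ[ℂ] (Mor (EObj n) → ℂ) := LinearEquiv.refl ℂ _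
  haveI : FiniteDimensional ℂ (MonoidAlgebra ℂ (PTMonoid n)) := Module.Finite.equiv e1.symm
  haveI : FiniteDimensional ℂ (CatAlg (EObj n)) := Module.Finite.equiv e2.symm
  have hfr : Module.finrank ℂ (MonoidAlgebra ℂ (PTMonoid n))
      = Module.finrank ℂ (CatAlg (EObj n)) := by
    rw [e1.finrank_eq, e2.finrank_eq, Module.finrank_fintype_fun_eq_card,
      Module.finrank_fintype_fun_eq_card]
    exact Fintype.card_congr (ptEquiv n)
  have hinj : Function.Injective ⇑L.toLinearMap :=
    (LinearMap.injective_iff_surjective_of_finrank_eq_finrank hfr).mpr hsurj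
  exact ⟨AlgEquiv.ofBijective L ⟨hinj, hsurj⟩⟩


open CatAlgebra in
/-- There is an isomorphism of `ℂ`-algebras between the complex monoid algebra of the
monoid `PT_n` of all partial functions on an `n`-element set and the complex category
algebra of the category `E_n` of all surjections between subsets of an `n`-element set. -/
theorem monoidAlgebra_PT_iso_catAlg_E (n : ℕ) :
    Nonempty (MonoidAlgebra ℂ (PTMonoid n) ≃ₐ[ℂ] CatAlg (EObj n)) :=
  monoidAlgebra_PT_iso_catAlg_E' n
end

section
/- Let k ≥ 2 and let κ₂ : {1,…,k+2} → {1,…,k} be the surjection with κ₂(i) = i for i ≤ k−1, κ₂(k) = k−1 and κ₂(k+1) = κ₂(k+2) = k. The stabilizer of κ₂ under the action of S_k × S_{k+2} given by (σ,π)·f = σ ∘ f ∘ π⁻¹ is K₂ = { (ρ·ν(τ), ρτ) : ρ ∈ S_{k−2}, τ ∈ D₄ }, where S_{k−2} is embedded in S_k and in S_{k+2} as the permutations fixing all points above k−2, D₄ is the dihedral subgroup of order 8 of the permutations of {k−1,k,k+1,k+2} generated (under the identification of {k−1,k,k+1,k+2} with {1,2,3,4}) by (1 2) and (1 3)(2 4),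 and ν : D₄ → S₂ is the group homomorphism sending (1 2) to the identity and (1 3)(2 4) to the transposition, with S₂ identified with the permutations of {k−1,k} inside S_k. In particular K₂ ≅ S_{k−2} × D₄. -/
open scoped Classical

noncomputable section

open Equiv

section PermEmbed

/-- Conjugating permutations by an equivalence, as an isomorphism of groups. -/
def permCongrMulEquiv {α β : Type} (e : α ≃ β) : Perm α ≃* Perm β :=
  { Equiv.permCongr e with
    map_mul' := fun f g => by
      ext x
      simp [Equiv.permCongr_apply] }

/-- Transport of permutation groups along an equality of cardinalities. -/
def castPermHom {m n : ℕ} (h : m = n) : Perm (Fin m) →* Perm (Fin n) :=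
  (permCongrMulEquiv (finCongr h)).toMonoidHom

/-- The standard embedding of `S_a × S_b` into `S_{a+b}`, where `S_a` permutes the
first `a` points and `S_b` permutes the last `b` points. -/
def embPair (a b : ℕ) : Perm (Fin a) × Perm (Fin b) →* Perm (Fin (a + b)) :=
  (permCongrMulEquiv finSumFinEquiv).toMonoidHom.comp (Equiv.Perm.sumCongrHom (Fin a) (Fin b))

end PermEmbed

section Surj

/-- The set of surjections from `{1, …, r}` onto `{1, …, k}`. -/
def SurjFun (r k : ℕ) : Type := {f : Fin r → Fin k // Function.Surjective f}

variable {r k : ℕ}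

instance : SMul (Perm (Fin k) × Perm (Fin r)) (SurjFun r k) :=
  ⟨fun p f => ⟨fun x => p.1 (f.1 (p.2⁻¹ x)), by
    intro y
    obtain ⟨x, hx⟩ := f.2 (p.1⁻¹ y)
    exact ⟨p.2 x, by simp [hx]⟩⟩⟩

lemma surj_smul_def (p : Perm (Fin k) × Perm (Fin r)) (f : SurjFun r k) (x : Fin r) :
    (p • f).1 x = p.1 (f.1 (p.2⁻¹ x)) := rfl

/-- The action of `S_k × S_r` on the surjections `{1,…,r} ↠ {1,…,k}` given by
`(σ, π) ⬝ f = σ ∘ f ∘ π⁻¹`. -/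
instance : MulAction (Perm (Fin k) × Perm (Fin r)) (SurjFun r k) where
  one_smul f := Subtype.ext (funext fun x => by simp [surj_smul_def])
  mul_smul p q f := Subtype.ext (funext fun x => by
    simp [surj_smul_def, Perm.mul_apply, mul_inv_rev])

/-- The multiset of sizes of the kernel classes of a surjection `f : {1,…,r} ↠ {1,…,k}`,
i.e. the integer partition `I(ker f)`. -/
def kernelSizes (f : Fin r → Fin k) : Multiset ℕ :=
  Finset.univ.val.map fun y => (Finset.univ.filter fun x => f x = y).card

lemma kernelSizes_smul (p : Perm (Fin k) × Perm (Fin r)) (f : SurjFun r k) :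
    kernelSizes (p • f).1 = kernelSizes f.1 := by
  obtain ⟨σ, π⟩ := p
  have hfib : ∀ y : Fin k,
      (Finset.univ.filter fun x => ((σ, π) • f).1 x = y) =
        (Finset.univ.filter fun x => f.1 x = σ⁻¹ y).map π.toEmbedding := by
    intro y
    ext x
    simp only [Finset.mem_filter, Finset.mem_map, Finset.mem_univ, true_and,
      Equiv.coe_toEmbedding, surj_smul_def]
    constructor
    · intro h
      refine ⟨π⁻¹ x, ?_, by simp⟩
      rw [← h]
      simp
    · rintro ⟨x', hx', rfl⟩
      simp [hx']
  have : kernelSizes ((σ, π) • f).1 =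
      Finset.univ.val.map fun y => (Finset.univ.filter fun x => f.1 x = σ⁻¹ y).card := by
    unfold kernelSizes
    refine Multiset.map_congr rfl fun y _ => ?_
    rw [hfib y, Finset.card_map]
  rw [this]
  unfold kernelSizes
  have huniv : Finset.univ.val.map (⇑σ⁻¹) = Finset.univ.val := by
    have := congrArg Finset.val (Finset.map_univ_equiv σ⁻¹)
    simpa [Finset.map] using this
  calc (Finset.univ.val.map fun y => (Finset.univ.filter fun x => f.1 x = σ⁻¹ y).card)
      = (Finset.univ.val.map (⇑σ⁻¹)).map
          (fun z => (Finset.univ.filter fun x => f.1 x = z).card) := by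
        rw [Multiset.map_map]
        rfl
    _ = Finset.univ.val.map (fun z => (Finset.univ.filter fun x => f.1 x = z).card) := by
        rw [huniv]

end Surj
/-- The canonical surjection `κ₂ : {1,…,k+2} → {1,…,k}` which is the identity on
`{1,…,k-1}` and sends `k` to `k-1` and `k+1, k+2` to `k` (written here `0`-indexed). -/
def kappa2 (k : ℕ) (hk : 2 ≤ k) : SurjFun (k + 2) k :=
  ⟨fun i => if h : i.val < k - 1 then ⟨i.val, by omega⟩
    else if i.val = k - 1 then ⟨k - 2, by omega⟩ else ⟨k - 1, by omega⟩, by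
    intro y
    by_cases hy : y.val = k - 1
    · refine ⟨⟨k, by omega⟩, ?_⟩
      apply Fin.ext
      simp only []
      split_ifs with h1 h2
      · (try simp at h1)
        omega
      · (try simp at h2)
        omega
      · simp
        omega
    · refine ⟨⟨y.val, by omega⟩, ?_⟩
      have h1 : y.val < k - 1 := by
        have := y.isLt
        omega
      apply Fin.ext
      simp [h1]⟩

/-- The transposition `(1 2)` of `S₄` (`0`-indexed: `(0 1)`). -/
def d4a : Perm (Fin 4) := Equiv.swap 0 1

/-- The double transposition `(1 3)(2 4)` of `S₄` (`0`-indexed: `(0 2)(1 3)`). -/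
def d4b : Perm (Fin 4) := Equiv.swap 0 2 * Equiv.swap 1 3

/-- The dihedral subgroup of order 8 of `S₄` generated by `(1 2)` and `(1 3)(2 4)`. -/
def D4 : Subgroup (Perm (Fin 4)) := Subgroup.closure {d4a, d4b}

/-- The four "corner-keeping" elements `id, (1 2), (3 4), (1 2)(3 4)` of `D₄`. -/
def D4pos : Finset (Perm (Fin 4)) :=
  {1, Equiv.swap 0 1, Equiv.swap 2 3, Equiv.swap 0 1 * Equiv.swap 2 3}

/-- The explicit list of the eight elements of `D₄`, as words in the generators. -/
def D4Finset : Finset (Perm (Fin 4)) :=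
  {1, d4a, d4b, d4a * d4b, d4b * d4a, d4a * d4b * d4a, d4b * d4a * d4b, d4a * d4b * d4a * d4b}

lemma mem_D4_iff (x : Perm (Fin 4)) : x ∈ D4 ↔ x ∈ D4Finset := by
  have ha : d4a ∈ D4 := Subgroup.subset_closure (by simp)
  have hb : d4b ∈ D4 := Subgroup.subset_closure (by simp)
  constructor
  · intro hx
    have hmul : ∀ a ∈ D4Finset, ∀ b ∈ D4Finset, a * b ∈ D4Finset := by decide
    have hinv : ∀ a ∈ D4Finset, a⁻¹ ∈ D4Finset := by decide
    have hone : (1 : Perm (Fin 4)) ∈ D4Finset := by decide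
    have hle : D4 ≤
        { carrier := ↑D4Finset
          one_mem' := Finset.mem_coe.mpr hone
          mul_mem' := fun {a b} ha hb => Finset.mem_coe.mpr
            (hmul a (Finset.mem_coe.mp ha) b (Finset.mem_coe.mp hb))
          inv_mem' := fun {a} ha => Finset.mem_coe.mpr (hinv a (Finset.mem_coe.mp ha))
          : Subgroup (Perm (Fin 4))} := by
      rw [D4]
      apply (Subgroup.closure_le _).mpr
      intro y hy
      rcases hy with h | h
      · subst h
        exact Finset.mem_coe.mpr (by decide : d4a ∈ D4Finset)
      · rw [Set.mem_singleton_iff] at h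
        subst h
        exact Finset.mem_coe.mpr (by decide : d4b ∈ D4Finset)
    exact hle hx
  · intro hx
    simp only [D4Finset, Finset.mem_insert, Finset.mem_singleton] at hx
    rcases hx with h | h | h | h | h | h | h | h <;> subst h
    · exact one_mem _
    · exact ha
    · exact hb
    · exact mul_mem ha hb
    · exact mul_mem hb ha
    · exact mul_mem (mul_mem ha hb) ha
    · exact mul_mem (mul_mem hb ha) hb
    · exact mul_mem (mul_mem (mul_mem ha hb) ha) hb

/-- The function underlying the homomorphism `ν : D₄ → S₂`, sending the four
corner-keeping elements to the identity and the other four to the transposition. -/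
def nuFun (p : Perm (Fin 4)) : Perm (Fin 2) := if p ∈ D4pos then 1 else Equiv.swap 0 1

private lemma nuFun_mul : ∀ x ∈ D4Finset, ∀ y ∈ D4Finset, nuFun (x * y) = nuFun x * nuFun y := by
  decide

/-- The homomorphism `ν : D₄ → S₂` with `ν((1 2)) = id` and `ν((1 3)(2 4)) = (1 2)`. -/
def nuHom : ↥D4 →* Perm (Fin 2) where
  toFun g := nuFun g.1
  map_one' := by decide
  map_mul' g h := nuFun_mul g.1 ((mem_D4_iff _).mp g.2) h.1 ((mem_D4_iff _).mp h.2)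


lemma embPair_apply_val {a b n : ℕ} (h : a + b = n) (ρ : Perm (Fin a)) (g : Perm (Fin b))
    (x : Fin n) :
    ((castPermHom h (embPair a b (ρ, g))) x).val =
      if hx : x.val < a then (ρ ⟨x.val, hx⟩).val
      else a + (g ⟨x.val - a, by omega⟩).val := by
  show (((finCongr h).permCongr ((finSumFinEquiv.permCongr) (ρ.sumCongr g))) x).val = _
  rw [Equiv.permCongr_apply, Equiv.permCongr_apply]
  split_ifs with hx
  · have h1 : finSumFinEquiv.symm ((finCongr h).symm x) = Sum.inl (⟨x.val, hx⟩ : Fin a) := by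
      rw [Equiv.symm_apply_eq]
      apply Fin.ext; simp
    rw [h1]
    simp
  · have h1 : finSumFinEquiv.symm ((finCongr h).symm x) =
        Sum.inr (⟨x.val - a, by omega⟩ : Fin b) := by
      rw [Equiv.symm_apply_eq]
      apply Fin.ext; simp; omega
    rw [h1]
    simp
lemma d4_div_two : ∀ τ ∈ D4Finset, ∀ j : Fin 4,
    ((τ j : ℕ) / 2) = ((nuFun τ) ⟨j.val / 2, by omega⟩ : ℕ) := by decide

lemma d4_of_div_two : ∀ τ : Perm (Fin 4), ∀ s : Perm (Fin 2),
    (∀ j : Fin 4, ((τ j : ℕ) / 2) = (s ⟨j.val / 2, by omega⟩ : ℕ)) →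
      τ ∈ D4Finset ∧ s = nuFun τ := by decide
lemma kappa2_val {k : ℕ} (hk : 2 ≤ k) (x : Fin (k + 2)) :
    ((kappa2 k hk).1 x).val = if x.val < k - 2 then x.val else k - 2 + (x.val - (k - 2)) / 2 := by
  show (if h : x.val < k - 1 then (⟨x.val, by omega⟩ : Fin k)
    else if x.val = k - 1 then ⟨k - 2, by omega⟩ else ⟨k - 1, by omega⟩).val = _
  have := x.isLt
  split_ifs <;> simp_all <;> omega

lemma kappa2_val_lt {k : ℕ} (hk : 2 ≤ k) (x : Fin (k + 2)) (hx : x.val < k - 2) :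
    ((kappa2 k hk).1 x).val = x.val := by
  rw [kappa2_val, if_pos hx]

lemma kappa2_val_ge {k : ℕ} (hk : 2 ≤ k) (x : Fin (k + 2)) (j : ℕ) (hx : x.val = k - 2 + j) :
    ((kappa2 k hk).1 x).val = k - 2 + j / 2 := by
  have := x.isLt
  rw [kappa2_val, if_neg (by omega)]
  have : x.val - (k - 2) = j := by omega
  rw [this]

lemma embPair_apply_val_lt {a b n : ℕ} (h : a + b = n) (ρ : Perm (Fin a)) (g : Perm (Fin b))
    (x : Fin n) (j : Fin a) (hj : x.val = j.val) :
    ((castPermHom h (embPair a b (ρ, g))) x).val = (ρ j).val := by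
  have hx : x.val < a := hj ▸ j.isLt
  rw [embPair_apply_val, dif_pos hx]
  exact congrArg (fun t => (ρ t).val) (Fin.ext hj)

lemma embPair_apply_val_ge {a b n : ℕ} (h : a + b = n) (ρ : Perm (Fin a)) (g : Perm (Fin b))
    (x : Fin n) (j : Fin b) (hj : x.val = a + j.val) :
    ((castPermHom h (embPair a b (ρ, g))) x).val = a + (g j).val := by
  have hjb := j.isLt
  rw [embPair_apply_val, dif_neg (by omega)]
  exact congrArg (fun t => a + (g t).val) (Fin.ext (by show x.val - a = j.val; omega))

lemma mem_stab_iff {r k : ℕ} (p : Perm (Fin k) × Perm (Fin r)) (f : SurjFun r k) :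
    p ∈ MulAction.stabilizer (Perm (Fin k) × Perm (Fin r)) f ↔
      ∀ x, p.1 (f.1 x) = f.1 (p.2 x) := by
  rw [MulAction.mem_stabilizer_iff]
  constructor
  · intro h x
    have := congrFun (congrArg Subtype.val h) (p.2 x)
    simpa [surj_smul_def] using this
  · intro h
    apply Subtype.ext; funext x
    rw [surj_smul_def]
    have := h (p.2⁻¹ x)
    rw [this]; simp

lemma pair_mem_stab (k : ℕ) (hk : 2 ≤ k) (ρ : Perm (Fin (k - 2))) (τ : ↥D4) :
    ((castPermHom (show k - 2 + 2 = k by have := hk; omega) (embPair (k - 2) 2 (ρ, nuHom τ)),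
      castPermHom (show k - 2 + 4 = k + 2 by have := hk; omega) (embPair (k - 2) 4 (ρ, τ.1)))
      ∈ MulAction.stabilizer (Perm (Fin k) × Perm (Fin (k + 2))) (kappa2 k hk)) := by
  rw [mem_stab_iff]
  intro x
  apply Fin.ext
  show ((castPermHom _ (embPair (k - 2) 2 (ρ, nuHom τ))) ((kappa2 k hk).1 x)).val =
    ((kappa2 k hk).1 ((castPermHom _ (embPair (k - 2) 4 (ρ, τ.1))) x)).val
  have hx2 := x.isLt
  by_cases hx : x.val < k - 2
  · have hρ := (ρ ⟨x.val, hx⟩).isLt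
    have hπ : ((castPermHom (show k - 2 + 4 = k + 2 by have := hk; omega)
        (embPair (k - 2) 4 (ρ, τ.1))) x).val = (ρ ⟨x.val, hx⟩).val :=
      embPair_apply_val_lt _ _ _ _ ⟨x.val, hx⟩ rfl
    rw [embPair_apply_val_lt _ _ _ _ ⟨x.val, hx⟩ (kappa2_val_lt hk x hx),
      kappa2_val_lt hk _ (by omega), hπ]
  · have hj : x.val - (k - 2) < 4 := by omega
    set j : Fin 4 := ⟨x.val - (k - 2), hj⟩ with hjdef
    have hjv : j.val = x.val - (k - 2) := rfl
    have hτ := (τ.1 j).isLt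
    have hπ : ((castPermHom (show k - 2 + 4 = k + 2 by have := hk; omega)
        (embPair (k - 2) 4 (ρ, τ.1))) x).val = k - 2 + (τ.1 j).val :=
      embPair_apply_val_ge _ _ _ _ j (by omega)
    have hm : j.val / 2 < 2 := by omega
    rw [embPair_apply_val_ge _ _ _ _ (⟨j.val / 2, hm⟩ : Fin 2)
        (kappa2_val_ge hk x j.val (by omega)),
      kappa2_val_ge hk _ (τ.1 j).val hπ]
    have key := d4_div_two τ.1 ((mem_D4_iff _).mp τ.2) j
    exact congrArg (fun t => k - 2 + t) key.symm
lemma kappa2_alone {k : ℕ} (hk : 2 ≤ k) (x : Fin (k + 2)) :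
    (∀ z, (kappa2 k hk).1 z = (kappa2 k hk).1 x → z = x) ↔ x.val < k - 2 := by
  have hx2 := x.isLt
  constructor
  · intro hall
    by_contra hx
    set z : Fin (k + 2) :=
      ⟨if (x.val - (k - 2)) % 2 = 0 then x.val + 1 else x.val - 1, by split_ifs <;> omega⟩ with hzdef
    have hzv : z.val = if (x.val - (k - 2)) % 2 = 0 then x.val + 1 else x.val - 1 := rfl
    have hz : (kappa2 k hk).1 z = (kappa2 k hk).1 x := by
      apply Fin.ext
      rw [kappa2_val, kappa2_val]
      split_ifs at hzv ⊢ <;> omega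
    have := congrArg Fin.val (hall z hz)
    rw [hzv] at this
    split_ifs at this <;> omega
  · intro hx z hz
    apply Fin.ext
    have h := congrArg Fin.val hz
    have hz2 := z.isLt
    rw [kappa2_val, kappa2_val] at h
    split_ifs at h <;> omega

lemma pi_preserves {k : ℕ} (hk : 2 ≤ k) (p : Perm (Fin k) × Perm (Fin (k + 2)))
    (hp : p ∈ MulAction.stabilizer (Perm (Fin k) × Perm (Fin (k + 2))) (kappa2 k hk))
    (x : Fin (k + 2)) : (p.2 x).val < k - 2 ↔ x.val < k - 2 := by
  have h1 := (mem_stab_iff p _).mp hp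
  have h2 := (mem_stab_iff p⁻¹ _).mp (inv_mem hp)
  rw [← kappa2_alone hk x, ← kappa2_alone hk (p.2 x)]
  constructor
  · intro hall z hz
    have : (kappa2 k hk).1 (p.2 z) = (kappa2 k hk).1 (p.2 x) := by
      rw [← h1 z, ← h1 x, hz]
    exact p.2.injective (hall _ this)
  · intro hall z hz
    have e1 : (kappa2 k hk).1 z = p.1 ((kappa2 k hk).1 (p.2⁻¹ z)) := by
      rw [h1 (p.2⁻¹ z)]; simp
    rw [e1, ← h1 x] at hz
    have := hall _ (p.1.injective hz)
    have := congrArg p.2 this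
    simpa using this

lemma sigma_eq_pi {k : ℕ} (hk : 2 ≤ k) (p : Perm (Fin k) × Perm (Fin (k + 2)))
    (hp : p ∈ MulAction.stabilizer (Perm (Fin k) × Perm (Fin (k + 2))) (kappa2 k hk))
    (y : Fin k) (hy : y.val < k - 2) :
    (p.1 y).val = (p.2 ⟨y.val, by omega⟩).val ∧ (p.1 y).val < k - 2 := by
  have h1 := (mem_stab_iff p _).mp hp ⟨y.val, by omega⟩
  have hκ : (kappa2 k hk).1 ⟨y.val, by omega⟩ = y :=
    Fin.ext (kappa2_val_lt hk _ hy)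
  rw [hκ] at h1
  have hπ : (p.2 ⟨y.val, by omega⟩ : Fin (k + 2)).val < k - 2 :=
    (pi_preserves hk p hp _).mpr hy
  have h2 : ((kappa2 k hk).1 (p.2 ⟨y.val, by omega⟩)).val = (p.2 ⟨y.val, by omega⟩).val :=
    kappa2_val_lt hk _ hπ
  constructor
  · rw [h1]; exact h2
  · rw [h1, h2]; exact hπ
lemma stab_sub (k : ℕ) (hk : 2 ≤ k) (p : Perm (Fin k) × Perm (Fin (k + 2)))
    (hp : p ∈ MulAction.stabilizer (Perm (Fin k) × Perm (Fin (k + 2))) (kappa2 k hk)) :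
    ∃ (ρ : Perm (Fin (k - 2))) (τ : ↥D4),
      p = (castPermHom (show k - 2 + 2 = k by have := hk; omega) (embPair (k - 2) 2 (ρ, nuHom τ)),
        castPermHom (show k - 2 + 4 = k + 2 by have := hk; omega) (embPair (k - 2) 4 (ρ, τ.1))) := by
  have hσπ := (mem_stab_iff p _).mp hp
  have hπiff := pi_preserves hk p hp
  have hσlow := fun y hy => (sigma_eq_pi hk p hp y hy).2
  have hσinvlow := fun y hy => (sigma_eq_pi hk p⁻¹ (inv_mem hp) y hy).2
  have hσiff : ∀ y : Fin k, (p.1 y).val < k - 2 ↔ y.val < k - 2 := by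
    intro y
    constructor
    · intro h
      have := hσinvlow (p.1 y) h
      simpa using this
    · exact hσlow y
  -- ρ from π on the lower part
  have hinjρ : Function.Injective (fun i : Fin (k - 2) =>
      (⟨(p.2 ⟨i.val, by have := i.isLt; omega⟩).val,
        (hπiff _).mpr i.isLt⟩ : Fin (k - 2))) := by
    intro i₁ i₂ h
    have h1 := congrArg Fin.val h
    dsimp only at h1
    have h2 : p.2 ⟨i₁.val, by have := i₁.isLt; omega⟩
        = p.2 ⟨i₂.val, by have := i₂.isLt; omega⟩ := Fin.ext h1
    have h3 := congrArg Fin.val (p.2.injective h2)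
    exact Fin.ext h3
  obtain ⟨ρ, hρval⟩ : ∃ ρ : Perm (Fin (k - 2)), ∀ (i : Fin (k - 2)) (h : i.val < k + 2),
      (ρ i).val = (p.2 ⟨i.val, h⟩).val :=
    ⟨Equiv.ofBijective _ (Finite.injective_iff_bijective.mp hinjρ), fun i h => rfl⟩
  -- τ from π on the upper part
  have hinjτ : Function.Injective (fun j : Fin 4 =>
      (⟨(p.2 ⟨k - 2 + j.val, by have := j.isLt; omega⟩).val - (k - 2),
        by have := (p.2 ⟨k - 2 + j.val, by have := j.isLt; omega⟩).isLt; omega⟩ : Fin 4)) := by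
    intro j₁ j₂ h
    have pb₁ : k - 2 + j₁.val < k + 2 := by have := j₁.isLt; omega
    have pb₂ : k - 2 + j₂.val < k + 2 := by have := j₂.isLt; omega
    have h1 : (p.2 ⟨k - 2 + j₁.val, pb₁⟩).val - (k - 2)
        = (p.2 ⟨k - 2 + j₂.val, pb₂⟩).val - (k - 2) := congrArg Fin.val h
    have e1 : ¬ (p.2 ⟨k - 2 + j₁.val, pb₁⟩).val < k - 2 := fun hlt => by
      have h' : k - 2 + j₁.val < k - 2 := (hπiff _).mp hlt
      omega
    have e2 : ¬ (p.2 ⟨k - 2 + j₂.val, pb₂⟩).val < k - 2 := fun hlt => by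
      have h' : k - 2 + j₂.val < k - 2 := (hπiff _).mp hlt
      omega
    have h2 : p.2 ⟨k - 2 + j₁.val, pb₁⟩ = p.2 ⟨k - 2 + j₂.val, pb₂⟩ := Fin.ext (by omega)
    have h3 : k - 2 + j₁.val = k - 2 + j₂.val := congrArg Fin.val (p.2.injective h2)
    exact Fin.ext (by omega)
  obtain ⟨τ, hτval⟩ : ∃ τ : Perm (Fin 4), ∀ (j : Fin 4) (h : k - 2 + j.val < k + 2),
      k - 2 + (τ j).val = (p.2 ⟨k - 2 + j.val, h⟩).val := by
    refine ⟨Equiv.ofBijective _ (Finite.injective_iff_bijective.mp hinjτ), ?_⟩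
    intro j h
    show k - 2 + ((p.2 ⟨k - 2 + j.val, h⟩).val - (k - 2)) = (p.2 ⟨k - 2 + j.val, h⟩).val
    have : ¬ (p.2 ⟨k - 2 + j.val, h⟩).val < k - 2 := by
      intro hlt
      have h' : k - 2 + j.val < k - 2 := (hπiff _).mp hlt
      omega
    omega
  -- s from σ on the upper part
  have hinjs : Function.Injective (fun m : Fin 2 =>
      (⟨(p.1 ⟨k - 2 + m.val, by have := m.isLt; omega⟩).val - (k - 2),
        by have := (p.1 ⟨k - 2 + m.val, by have := m.isLt; omega⟩).isLt; omega⟩ : Fin 2)) := by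
    intro m₁ m₂ h
    have pb₁ : k - 2 + m₁.val < k := by have := m₁.isLt; omega
    have pb₂ : k - 2 + m₂.val < k := by have := m₂.isLt; omega
    have h1 : (p.1 ⟨k - 2 + m₁.val, pb₁⟩).val - (k - 2)
        = (p.1 ⟨k - 2 + m₂.val, pb₂⟩).val - (k - 2) := congrArg Fin.val h
    have e1 : ¬ (p.1 ⟨k - 2 + m₁.val, pb₁⟩).val < k - 2 := fun hlt => by
      have h' : k - 2 + m₁.val < k - 2 := (hσiff _).mp hlt
      omega
    have e2 : ¬ (p.1 ⟨k - 2 + m₂.val, pb₂⟩).val < k - 2 := fun hlt => by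
      have h' : k - 2 + m₂.val < k - 2 := (hσiff _).mp hlt
      omega
    have h2 : p.1 ⟨k - 2 + m₁.val, pb₁⟩ = p.1 ⟨k - 2 + m₂.val, pb₂⟩ := Fin.ext (by omega)
    have h3 : k - 2 + m₁.val = k - 2 + m₂.val := congrArg Fin.val (p.1.injective h2)
    exact Fin.ext (by omega)
  obtain ⟨s, hsval⟩ : ∃ s : Perm (Fin 2), ∀ (m : Fin 2) (h : k - 2 + m.val < k),
      k - 2 + (s m).val = (p.1 ⟨k - 2 + m.val, h⟩).val := by
    refine ⟨Equiv.ofBijective _ (Finite.injective_iff_bijective.mp hinjs), ?_⟩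
    intro m h
    show k - 2 + ((p.1 ⟨k - 2 + m.val, h⟩).val - (k - 2)) = (p.1 ⟨k - 2 + m.val, h⟩).val
    have : ¬ (p.1 ⟨k - 2 + m.val, h⟩).val < k - 2 := by
      intro hlt
      have h' : k - 2 + m.val < k - 2 := (hσiff _).mp hlt
      omega
    omega
  -- the two decomposition equations
  have hπeq : p.2 = castPermHom (show k - 2 + 4 = k + 2 by have := hk; omega) (embPair (k - 2) 4 (ρ, τ)) := by
    apply Equiv.ext
    intro x
    apply Fin.ext
    have hx2 := x.isLt
    by_cases hx : x.val < k - 2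
    · rw [embPair_apply_val_lt _ _ _ x ⟨x.val, hx⟩ rfl, hρval ⟨x.val, hx⟩ (by omega)]
    · rw [embPair_apply_val_ge _ _ _ x ⟨x.val - (k - 2), by omega⟩ (by simp; omega),
        hτval ⟨x.val - (k - 2), by omega⟩ (by simp; omega)]
      exact (congrArg (fun z => (p.2 z).val) (Fin.ext (by simp; omega))).symm
  have hσeq : p.1 = castPermHom (show k - 2 + 2 = k by have := hk; omega) (embPair (k - 2) 2 (ρ, s)) := by
    apply Equiv.ext
    intro x
    apply Fin.ext
    have hx2 := x.isLt
    by_cases hx : x.val < k - 2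
    · rw [embPair_apply_val_lt _ _ _ x ⟨x.val, hx⟩ rfl, hρval ⟨x.val, hx⟩ (by omega)]
      exact (sigma_eq_pi hk p hp x hx).1
    · rw [embPair_apply_val_ge _ _ _ x ⟨x.val - (k - 2), by omega⟩ (by simp; omega),
        hsval ⟨x.val - (k - 2), by omega⟩ (by simp; omega)]
      exact (congrArg (fun z => (p.1 z).val) (Fin.ext (by simp; omega))).symm
  -- the compatibility between τ and s
  have hcompat : ∀ j : Fin 4, ((τ j : ℕ) / 2) = (s ⟨j.val / 2, by omega⟩ : ℕ) := by
    intro j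
    have hj4 := j.isLt
    have hτj := (τ j).isLt
    have hm2 : j.val / 2 < 2 := by omega
    have hx : k - 2 + j.val < k + 2 := by omega
    have hx' : k - 2 + j.val / 2 < k := by omega
    have h := congrArg Fin.val (hσπ ⟨k - 2 + j.val, hx⟩)
    have hκx : (kappa2 k hk).1 ⟨k - 2 + j.val, hx⟩ = ⟨k - 2 + j.val / 2, by omega⟩ :=
      Fin.ext (kappa2_val_ge hk _ j.val rfl)
    have left : (p.1 ((kappa2 k hk).1 ⟨k - 2 + j.val, hx⟩)).val
        = k - 2 + (s ⟨j.val / 2, hm2⟩).val := by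
      rw [hκx]
      exact (hsval ⟨j.val / 2, hm2⟩ hx').symm
    have hπx : (p.2 ⟨k - 2 + j.val, hx⟩).val = k - 2 + (τ j).val := (hτval j hx).symm
    have h3 : ((kappa2 k hk).1 (p.2 ⟨k - 2 + j.val, hx⟩)).val = k - 2 + (τ j).val / 2 :=
      kappa2_val_ge hk _ (τ j).val hπx
    have E : k - 2 + (s ⟨j.val / 2, hm2⟩).val = k - 2 + (τ j).val / 2 :=
      left.symm.trans (h.trans h3)
    show ((τ j : ℕ) / 2) = (s ⟨j.val / 2, hm2⟩ : ℕ)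
    omega
  obtain ⟨hτD4, hsnu⟩ := d4_of_div_two τ s hcompat
  refine ⟨ρ, ⟨τ, (mem_D4_iff τ).mpr hτD4⟩, ?_⟩
  have : nuHom ⟨τ, (mem_D4_iff τ).mpr hτD4⟩ = s := by rw [hsnu]; rfl
  rw [← this] at hσeq
  exact Prod.ext hσeq hπeq

/-- The stabilizer of `κ₂` under the `S_k × S_{k+2}`-action `(σ,π) ⬝ f = σ ∘ f ∘ π⁻¹`
on surjections is `K₂ = {(ρ·ν(τ), ρτ) : ρ ∈ S_{k-2}, τ ∈ D₄}` (with `S_{k-2}` embedded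
in `S_k` and `S_{k+2}` fixing the points above `k-2`, `D₄` permuting the last four
points of `{1,…,k+2}`, and `ν(τ) ∈ S₂` permuting the points `{k-1, k}` of `{1,…,k}`);
in particular it is isomorphic to `S_{k-2} × D₄`. -/
theorem stabilizer_kappa2 (k : ℕ) (hk : 2 ≤ k) :
    ((MulAction.stabilizer (Perm (Fin k) × Perm (Fin (k + 2))) (kappa2 k hk) : Set _) =
      {p : Perm (Fin k) × Perm (Fin (k + 2)) |
        ∃ (ρ : Perm (Fin (k - 2))) (τ : ↥D4),
          p = (castPermHom (show k - 2 + 2 = k by omega) (embPair (k - 2) 2 (ρ, nuHom τ)),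
            castPermHom (show k - 2 + 4 = k + 2 by omega) (embPair (k - 2) 4 (ρ, τ.1)))}) ∧
    Nonempty (↥(MulAction.stabilizer (Perm (Fin k) × Perm (Fin (k + 2))) (kappa2 k hk))
      ≃* Perm (Fin (k - 2)) × ↥D4) := by
  constructor
  · ext p
    constructor
    · exact stab_sub k hk p
    · rintro ⟨ρ, τ, rfl⟩
      exact pair_mem_stab k hk ρ τ
  · -- build the isomorphism
    set φ : Perm (Fin (k - 2)) × ↥D4 →* Perm (Fin k) × Perm (Fin (k + 2)) :=
      MonoidHom.prod
        ((castPermHom (show k - 2 + 2 = k by omega)).comp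
          ((embPair (k - 2) 2).comp
            (MonoidHom.prodMap (MonoidHom.id (Perm (Fin (k - 2)))) nuHom)))
        ((castPermHom (show k - 2 + 4 = k + 2 by omega)).comp
          ((embPair (k - 2) 4).comp
            (MonoidHom.prodMap (MonoidHom.id (Perm (Fin (k - 2)))) D4.subtype))) with hφdef
    have hφ : ∀ x : Perm (Fin (k - 2)) × ↥D4,
        φ x = (castPermHom (show k - 2 + 2 = k by omega) (embPair (k - 2) 2 (x.1, nuHom x.2)),
          castPermHom (show k - 2 + 4 = k + 2 by omega) (embPair (k - 2) 4 (x.1, x.2.1))) :=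
      fun x => rfl
    have hinj : Function.Injective φ := by
      intro x y hxy
      have h2 : castPermHom (show k - 2 + 4 = k + 2 by omega) (embPair (k - 2) 4 (x.1, x.2.1))
          = castPermHom (show k - 2 + 4 = k + 2 by omega) (embPair (k - 2) 4 (y.1, y.2.1)) :=
        congrArg Prod.snd hxy
      have e1 : embPair (k - 2) 4 (x.1, x.2.1) = embPair (k - 2) 4 (y.1, y.2.1) :=
        (permCongrMulEquiv (finCongr (show k - 2 + 4 = k + 2 by omega))).injective h2
      have e2 : Equiv.Perm.sumCongrHom (Fin (k - 2)) (Fin 4) (x.1, x.2.1)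
          = Equiv.Perm.sumCongrHom (Fin (k - 2)) (Fin 4) (y.1, y.2.1) :=
        (permCongrMulEquiv finSumFinEquiv).injective e1
      have h3 := Equiv.Perm.sumCongrHom_injective e2
      have hfst : x.1 = y.1 :=
        congrArg (fun q : Perm (Fin (k - 2)) × Perm (Fin 4) => q.1) h3
      have hsnd : x.2 = y.2 :=
        Subtype.ext (congrArg (fun q : Perm (Fin (k - 2)) × Perm (Fin 4) => q.2) h3)
      exact Prod.ext hfst hsnd
    have hrange : φ.range
        = MulAction.stabilizer (Perm (Fin k) × Perm (Fin (k + 2))) (kappa2 k hk) := by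
      ext p
      constructor
      · rintro ⟨⟨ρ, τ⟩, rfl⟩
        rw [hφ]
        exact pair_mem_stab k hk ρ τ
      · intro hp
        obtain ⟨ρ, τ, rfl⟩ := stab_sub k hk p hp
        exact ⟨(ρ, τ), (hφ (ρ, τ)).symm⟩
    exact ⟨(MulEquiv.subgroupCongr hrange.symm).trans (MonoidHom.ofInjective hinj).symm⟩

end
end
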